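/- arXiv:1602.00743 — 3 statements merged into one kernel-verified Lean document; each statement's English description precedes it below -/
import Mathlib

section
/- Every real number x in [a_0 − 1, a_0] admits a representation x = ∑_{n=1}^∞ (−1)^n ε_n/(d_1⋯d_n) with ε_n ∈ {0,...,d_n−1} for all n. -/
open Finset

/-- Product d_1 d_2 ... d_n. -/
noncomputable def P (d : ℕ → ℕ) (n : ℕ) : ℝ := ∏ i ∈ Finset.Icc 1 n, (d i : ℝ)

/-- The alternating Cantor series sum ∑_{n≥1} (-1)^n ε_n/(d_1...d_n). -/
noncomputable def negaSum (d ε : ℕ → ℕ) : ℝ :=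
  ∑' n : ℕ, (-1 : ℝ) ^ (n + 1) * (ε (n + 1) : ℝ) / P d (n + 1)

/-- a₀ = ∑_{n≥1} (-1)^{n+1}/(d_1...d_n). -/
noncomputable def a0 (d : ℕ → ℕ) : ℝ := ∑' n : ℕ, (-1 : ℝ) ^ n / P d (n + 1)

noncomputable def zseq (d : ℕ → ℕ) (y : ℝ) : ℕ → ℝ
  | 0 => y
  | n + 1 => 1 - ((d (n + 1) : ℝ) * zseq d y n
      - (min (⌊(d (n + 1) : ℝ) * zseq d y n⌋₊) (d (n + 1) - 1) : ℕ))

noncomputable def eps (d : ℕ → ℕ) (y : ℝ) (n : ℕ) : ℕ :=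
  min (⌊(d n : ℝ) * zseq d y (n - 1)⌋₊) (d n - 1)

lemma P_zero (d : ℕ → ℕ) : P d 0 = 1 := by simp [P]

lemma P_succ (d : ℕ → ℕ) (n : ℕ) : P d (n + 1) = P d n * d (n + 1) := by
  simp [P, Finset.prod_Icc_succ_top (Nat.le_add_left 1 n)]

lemma P_ge (d : ℕ → ℕ) (hd : ∀ n, 1 ≤ n → 2 ≤ d n) (n : ℕ) : (2 : ℝ) ^ n ≤ P d n := by
  induction n with
  | zero => simp [P_zero]
  | succ n ih =>
    rw [P_succ, pow_succ]
    have h2 : (2 : ℝ) ≤ d (n + 1) := by exact_mod_cast hd (n + 1) (by omega)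
    have := pow_pos (by norm_num : (0:ℝ) < 2) n
    nlinarith

lemma P_pos (d : ℕ → ℕ) (hd : ∀ n, 1 ≤ n → 2 ≤ d n) (n : ℕ) : 0 < P d n :=
  lt_of_lt_of_le (pow_pos (by norm_num) n) (P_ge d hd n)

lemma zseq_succ (d : ℕ → ℕ) (y : ℝ) (n : ℕ) :
    zseq d y (n + 1) = 1 - ((d (n + 1) : ℝ) * zseq d y n - (eps d y (n + 1) : ℕ)) := rfl

lemma eps_bounds (d : ℕ → ℕ) (hd : ∀ n, 1 ≤ n → 2 ≤ d n) (y : ℝ) (n : ℕ)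
    (hz : zseq d y n ∈ Set.Icc (0 : ℝ) 1) :
    (eps d y (n + 1) : ℝ) ≤ (d (n + 1) : ℝ) * zseq d y n ∧
      (d (n + 1) : ℝ) * zseq d y n ≤ (eps d y (n + 1) : ℝ) + 1 := by
  obtain ⟨hz0, hz1⟩ := hz
  have hd2 : 2 ≤ d (n + 1) := hd (n + 1) (by omega)
  set t := (d (n + 1) : ℝ) * zseq d y n with ht
  have ht0 : 0 ≤ t := mul_nonneg (by positivity) hz0
  have hd2' : (2:ℝ) ≤ (d (n + 1) : ℝ) := by exact_mod_cast hd2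
  have htd : t ≤ (d (n + 1) : ℝ) := by nlinarith
  have heq : eps d y (n + 1) = min (⌊t⌋₊) (d (n + 1) - 1) := rfl
  by_cases h : ⌊t⌋₊ ≤ d (n + 1) - 1
  · rw [heq, min_eq_left h]
    exact ⟨Nat.floor_le ht0, le_of_lt (Nat.lt_floor_add_one t)⟩
  · push_neg at h
    have hfl : (d (n + 1) : ℝ) ≤ t := by
      have hle : d (n + 1) ≤ ⌊t⌋₊ := by omega
      exact le_trans (Nat.cast_le.mpr hle) (Nat.floor_le ht0)
    have hteq : t = (d (n + 1) : ℝ) := le_antisymm htd hfl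
    rw [heq, min_eq_right (by omega : d (n + 1) - 1 ≤ ⌊t⌋₊)]
    have hc : ((d (n + 1) - 1 : ℕ) : ℝ) = (d (n + 1) : ℝ) - 1 := by
      have : 1 ≤ d (n+1) := by omega
      push_cast [this]; ring
    rw [hc, hteq]
    constructor <;> linarith

lemma zseq_mem (d : ℕ → ℕ) (hd : ∀ n, 1 ≤ n → 2 ≤ d n) (y : ℝ)
    (hy : y ∈ Set.Icc (0 : ℝ) 1) (n : ℕ) : zseq d y n ∈ Set.Icc (0 : ℝ) 1 := by
  induction n with
  | zero => exact hy
  | succ n ih =>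
    obtain ⟨h1, h2⟩ := eps_bounds d hd y n ih
    obtain ⟨ih1, ih2⟩ := ih
    rw [zseq_succ]
    exact Set.mem_Icc.mpr ⟨by linarith, by linarith⟩

/-- Partial sum identity. -/
lemma partial_sum_eq (d : ℕ → ℕ) (hd : ∀ n, 1 ≤ n → 2 ≤ d n) (y : ℝ) (N : ℕ) :
    y = (∑ k ∈ Finset.range N, (-1 : ℝ) ^ k * (1 + (eps d y (k + 1) : ℝ)) / P d (k + 1))
      + (-1 : ℝ) ^ N * zseq d y N / P d N := by
  induction N with
  | zero => simp [zseq, P_zero]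
  | succ N ih =>
    rw [Finset.sum_range_succ]
    have hP : P d N ≠ 0 := ne_of_gt (P_pos d hd N)
    have hPd : (d (N + 1) : ℝ) ≠ 0 := by
      have := hd (N + 1) (by omega); positivity
    have hz : zseq d y N = (1 + (eps d y (N + 1) : ℝ) - zseq d y (N + 1)) / d (N + 1) := by
      rw [zseq_succ]; field_simp; ring
    have hstep : (-1:ℝ)^N * zseq d y N / P d N
        = (-1:ℝ)^N * (1 + (eps d y (N+1) : ℝ)) / P d (N+1)
          + (-1:ℝ)^(N+1) * zseq d y (N+1) / P d (N+1) := by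
      rw [hz, P_succ]
      field_simp
      ring
    linarith [ih, hstep]

lemma summable_aux (d : ℕ → ℕ) (hd : ∀ n, 1 ≤ n → 2 ≤ d n) (c : ℕ → ℝ)
    (hc : ∀ k, |c k| ≤ (d (k + 1) : ℝ)) :
    Summable (fun k => c k / P d (k + 1)) := by
  apply Summable.of_norm
  apply Summable.of_nonneg_of_le (fun k => norm_nonneg _) (fun k => ?_)
    summable_geometric_two
  have hPpos := P_pos d hd (k + 1)
  have hdpos : (0:ℝ) < d (k + 1) := by
    have := hd (k + 1) (by omega)
    exact_mod_cast (by omega : 0 < d (k + 1))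
  have h1 : ‖c k / P d (k + 1)‖ = |c k| / P d (k + 1) := by
    rw [norm_div, Real.norm_eq_abs, Real.norm_eq_abs, abs_of_pos hPpos]
  rw [h1]
  have hP1 : (2:ℝ)^k ≤ P d k := P_ge d hd k
  have hPk : 0 < P d k := P_pos d hd k
  have step1 : |c k| / P d (k + 1) ≤ 1 / P d k := by
    have h2 : |c k| / P d (k + 1) ≤ (d (k+1) : ℝ) / P d (k + 1) := by
      gcongr
      exact hc k
    refine h2.trans_eq ?_
    rw [P_succ]
    field_simp
  refine step1.trans ?_
  rw [div_pow, one_pow, div_le_div_iff₀ hPk (by positivity)]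
  nlinarith

theorem alternating_cantor_representation (d : ℕ → ℕ) (hd : ∀ n, 1 ≤ n → 2 ≤ d n)
    (x : ℝ) (hx : x ∈ Set.Icc (a0 d - 1) (a0 d)) :
    ∃ ε : ℕ → ℕ, (∀ n, 1 ≤ n → ε n ≤ d n - 1) ∧ x = negaSum d ε := by
  obtain ⟨hx1, hx2⟩ := hx
  set y := a0 d - x with hy_def
  have hy : y ∈ Set.Icc (0 : ℝ) 1 := ⟨by linarith, by linarith⟩
  refine ⟨eps d y, fun n _ => min_le_right _ _, ?_⟩
  have heps_le : ∀ k, (eps d y (k + 1) : ℝ) ≤ (d (k + 1) : ℝ) - 1 := by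
    intro k
    have h1 : eps d y (k + 1) ≤ d (k + 1) - 1 := min_le_right _ _
    have h2 : 2 ≤ d (k + 1) := hd (k + 1) (by omega)
    have : (eps d y (k+1) : ℝ) ≤ ((d (k+1) - 1 : ℕ) : ℝ) := by exact_mod_cast h1
    refine this.trans ?_
    have h3 : 1 ≤ d (k + 1) := by omega
    rw [Nat.cast_sub h3, Nat.cast_one]
  -- three summable series
  have hf : Summable (fun k => (-1:ℝ)^k * (1 + (eps d y (k + 1) : ℝ)) / P d (k + 1)) := by
    apply summable_aux d hd
    intro k
    rw [abs_mul, abs_pow, abs_neg, abs_one, one_pow, one_mul,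
      abs_of_nonneg (by positivity : (0:ℝ) ≤ 1 + (eps d y (k+1) : ℝ))]
    linarith [heps_le k]
  have hg : Summable (fun k => (-1:ℝ)^k / P d (k + 1)) := by
    apply summable_aux d hd
    intro k
    rw [abs_pow, abs_neg, abs_one, one_pow]
    have := hd (k + 1) (by omega)
    exact_mod_cast (by omega : 1 ≤ d (k + 1))
  have hh : Summable (fun k => (-1:ℝ)^(k+1) * (eps d y (k + 1) : ℝ) / P d (k + 1)) := by
    apply summable_aux d hd
    intro k
    rw [abs_mul, abs_pow, abs_neg, abs_one, one_pow, one_mul,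
      abs_of_nonneg (by positivity : (0:ℝ) ≤ (eps d y (k+1) : ℝ))]
    linarith [heps_le k]
  -- HasSum f y
  have hfy : HasSum (fun k => (-1:ℝ)^k * (1 + (eps d y (k + 1) : ℝ)) / P d (k + 1)) y := by
    have htend : Filter.Tendsto
        (fun N => ∑ k ∈ Finset.range N,
          (-1:ℝ)^k * (1 + (eps d y (k + 1) : ℝ)) / P d (k + 1))
        Filter.atTop (nhds y) := by
      have hdiff : ∀ N, y - (∑ k ∈ Finset.range N,
          (-1:ℝ)^k * (1 + (eps d y (k + 1) : ℝ)) / P d (k + 1))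
          = (-1:ℝ)^N * zseq d y N / P d N := by
        intro N
        have := partial_sum_eq d hd y N
        linarith
      have hlim : Filter.Tendsto (fun N => (-1:ℝ)^N * zseq d y N / P d N)
          Filter.atTop (nhds 0) := by
        apply squeeze_zero_norm (fun N => ?_)
          (tendsto_pow_atTop_nhds_zero_of_lt_one (by norm_num : (0:ℝ) ≤ 1/2) (by norm_num) )
        have hz := zseq_mem d hd y hy N
        have hPpos := P_pos d hd N
        have hPge := P_ge d hd N
        rw [norm_div, norm_mul, norm_pow, norm_neg, norm_one, one_pow, one_mul,
          Real.norm_eq_abs, Real.norm_eq_abs, abs_of_pos hPpos,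
          abs_of_nonneg hz.1]
        calc zseq d y N / P d N ≤ 1 / P d N := by
              gcongr
              exact hz.2
          _ ≤ (1/2)^N := by
              rw [div_pow, one_pow, div_le_div_iff₀ hPpos (by positivity)]
              nlinarith
      have h2 : Filter.Tendsto (fun N => y - (-1:ℝ)^N * zseq d y N / P d N)
          Filter.atTop (nhds (y - 0)) := Filter.Tendsto.const_sub y hlim
      simp only [sub_zero] at h2
      refine h2.congr (fun N => ?_)
      have := hdiff N
      linarith
    have h1 := hf.hasSum
    have h2 := h1.tendsto_sum_nat
    have := tendsto_nhds_unique h2 htend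
    rwa [this] at h1
  -- HasSum g (a0 d)
  have hga : HasSum (fun k => (-1:ℝ)^k / P d (k + 1)) (a0 d) := by
    have := hg.hasSum
    rwa [show ∑' k, (-1:ℝ)^k / P d (k + 1) = a0 d from rfl] at this
  -- combine: h = g - f
  have hkey : HasSum (fun k => (-1:ℝ)^(k+1) * (eps d y (k + 1) : ℝ) / P d (k + 1))
      (a0 d - y) := by
    have hfun : (fun k => (-1:ℝ)^(k+1) * (eps d y (k + 1) : ℝ) / P d (k + 1))
        = fun k => (-1:ℝ)^k / P d (k + 1)
          - (-1:ℝ)^k * (1 + (eps d y (k + 1) : ℝ)) / P d (k + 1) := by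
      funext k
      rw [pow_succ]
      ring
    rw [hfun]
    exact hga.sub hfy
  have : negaSum d (eps d y) = a0 d - y := hkey.tsum_eq
  rw [this, hy_def]
  ring
end

section
/- If x = ∑_{n=1}^∞ (−1)^n ε_n/(d_1⋯d_n) and φ̂^k(x) = ∑_{j=1}^∞ (−1)^j ε_{k+j}/(d_{k+1}⋯d_{k+j}) denotes the k-fold shift, then φ̂^k(x) = (−1)^k d_1⋯d_k · x + (−1)^{k+1} d_1⋯d_k · ∑_{i=1}^k (−1)^i ε_i/(d_1⋯d_i). -/
open Finset

/-- k-fold shift of the representation: ∑_{j≥1} (-1)^j ε_{k+j}/(d_{k+1}...d_{k+j}). -/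
noncomputable def shift (d ε : ℕ → ℕ) (k : ℕ) : ℝ :=
  ∑' j : ℕ, (-1 : ℝ) ^ (j + 1) * (ε (k + j + 1) : ℝ) / ∏ i ∈ Finset.Icc (k + 1) (k + j + 1), (d i : ℝ)

/-- Partial sum g_k = ∑_{i=1}^k (-1)^i ε_i/(d_1...d_i). -/
noncomputable def g (d ε : ℕ → ℕ) (k : ℕ) : ℝ :=
  ∑ i ∈ Finset.Icc 1 k, (-1 : ℝ) ^ i * (ε i : ℝ) / P d i

theorem shift_eq_affine (d ε : ℕ → ℕ) (k : ℕ)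
    (hd : ∀ n, 1 ≤ n → 2 ≤ d n) (hε : ∀ n, 1 ≤ n → ε n ≤ d n - 1) :
    shift d ε k = (-1 : ℝ) ^ k * P d k * negaSum d ε +
      (-1 : ℝ) ^ (k + 1) * P d k * g d ε k := by
  set a : ℕ → ℝ := fun n => (-1 : ℝ) ^ (n + 1) * (ε (n + 1) : ℝ) / P d (n + 1) with ha
  have hpos := P_pos d hd
  -- summability
  have hsum : Summable a := by
    apply Summable.of_norm_bounded (g := fun n => (1/2 : ℝ) ^ n)
      (summable_geometric_of_lt_one (by norm_num) (by norm_num))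
    intro n
    have h1 : ‖a n‖ = (ε (n+1) : ℝ) / P d (n+1) := by
      rw [ha]
      simp [abs_div, abs_mul, abs_pow, abs_of_pos (hpos (n+1))]
    rw [h1]
    have hd1 : (2:ℝ) ≤ d (n+1) := by exact_mod_cast hd (n+1) (Nat.le_add_left 1 n)
    have hε1 : (ε (n+1) : ℝ) ≤ d (n+1) := by
      have := hε (n+1) (Nat.le_add_left 1 n)
      have : ε (n+1) ≤ d (n+1) := le_trans this (Nat.sub_le _ _)
      exact_mod_cast this
    have hdne : (d (n+1) : ℝ) ≠ 0 := by linarith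
    calc (ε (n+1) : ℝ) / P d (n+1) ≤ (d (n+1) : ℝ) / P d (n+1) := by
          gcongr; exact (hpos (n+1)).le
      _ = 1 / P d n := by
          rw [P_succ, div_eq_div_iff (mul_pos (hpos n) (by linarith : (0:ℝ) < d (n+1))).ne' (hpos n).ne']; ring
      _ ≤ 1 / 2 ^ n := by
          exact one_div_le_one_div_of_le (by positivity) (P_ge d hd n)
      _ = (1/2 : ℝ) ^ n := by rw [div_pow, one_pow]
  have hg : ∑ i ∈ Finset.range k, a i = g d ε k := by
    unfold g
    rw [← Finset.Ico_add_one_right_eq_Icc, Finset.sum_Ico_eq_sum_range]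
    exact Finset.sum_congr rfl fun i _ => by rw [ha]; simp [add_comm 1 i]
  have hshift : shift d ε k = (-1:ℝ)^k * P d k * ∑' j, a (j + k) := by
    unfold shift
    rw [← tsum_mul_left]
    apply tsum_congr
    intro j
    have hQpos : (0:ℝ) < ∏ i ∈ Finset.Icc (k+1) (k+j+1), (d i : ℝ) := by
      apply Finset.prod_pos
      intro i hi
      have := hd i (le_trans (Nat.le_add_left 1 k) (Finset.mem_Icc.mp hi).1)
      positivity
    have hprod : P d (k + j + 1) = P d k * ∏ i ∈ Finset.Icc (k+1) (k+j+1), (d i : ℝ) := by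
      unfold P
      rw [show (1:ℕ) = 0 + 1 from rfl, Finset.Icc_add_one_left_eq_Ioc, Finset.Icc_add_one_left_eq_Ioc,
        zero_add, Finset.Icc_add_one_left_eq_Ioc, Finset.prod_Ioc_consecutive _ (Nat.zero_le k) (by omega)]
    have hsgn : ((-1:ℝ))^(k+j+1) = (-1)^(j+1) * (-1)^k := by
      rw [show k+j+1 = (j+1)+k from by ring, pow_add]
    rw [ha]
    simp only
    rw [show j + k + 1 = k + j + 1 from by ring, hprod, hsgn]
    field_simp [(hpos k).ne', hQpos.ne']
    ring_nf
    rw [pow_mul', neg_one_sq, one_pow, mul_one]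
  have htail := Summable.sum_add_tsum_nat_add (f := a) k hsum
  rw [hg] at htail
  have hS : negaSum d ε = ∑' n, a n := rfl
  rw [hshift, show (∑' j, a (j + k)) = negaSum d ε - g d ε k from by rw [hS]; linarith,
    pow_succ]
  ring
end

section
/- If x = ∑_{n=1}^∞ (−1)^n ε_n/(d_1⋯d_n) satisfies φ̂^m(x) = x for the m-fold shift operator, then x = (1 + 1/((−1)^m d_1⋯d_m − 1)) · ∑_{i=1}^m (−1)^i ε_i/(d_1⋯d_i). -/
open Finset

lemma two_pow_le_prod (d : ℕ → ℕ) (hd : ∀ n, 1 ≤ n → 2 ≤ d n) (a b : ℕ) (ha : 1 ≤ a) :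
    (2 : ℝ) ^ (Finset.Icc a b).card ≤ ∏ i ∈ Finset.Icc a b, (d i : ℝ) := by
  rw [← Finset.prod_const]
  refine Finset.prod_le_prod (fun i _ => by norm_num) (fun i hi => ?_)
  exact_mod_cast hd i (le_trans ha (Finset.mem_Icc.mp hi).1)

lemma prod_pos' (d : ℕ → ℕ) (hd : ∀ n, 1 ≤ n → 2 ≤ d n) (a b : ℕ) (ha : 1 ≤ a) :
    (0 : ℝ) < ∏ i ∈ Finset.Icc a b, (d i : ℝ) :=
  lt_of_lt_of_le (by positivity) (two_pow_le_prod d hd a b ha)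

lemma shift_term_summable (d ε : ℕ → ℕ) (hd : ∀ n, 1 ≤ n → 2 ≤ d n)
    (hε : ∀ n, 1 ≤ n → ε n ≤ d n - 1) (k : ℕ) :
    Summable (fun j : ℕ => (-1 : ℝ) ^ (j + 1) * (ε (k + j + 1) : ℝ) /
      ∏ i ∈ Finset.Icc (k + 1) (k + j + 1), (d i : ℝ)) := by
  apply Summable.of_abs
  refine Summable.of_nonneg_of_le (fun j => abs_nonneg _) (fun j => ?_)
    (summable_geometric_of_lt_one (r := (1/2:ℝ)) (by norm_num) (by norm_num))
  have hpos := prod_pos' d hd (k+1) (k+j+1) (Nat.le_add_left 1 k)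
  have hpos' := prod_pos' d hd (k+1) (k+j) (Nat.le_add_left 1 k)
  have hsplit : (∏ i ∈ Finset.Icc (k+1) (k+j+1), (d i : ℝ)) =
      (∏ i ∈ Finset.Icc (k+1) (k+j), (d i : ℝ)) * d (k+j+1) := by
    rw [Finset.prod_Icc_succ_top (by omega)]
  have hcard : (Finset.Icc (k+1) (k+j)).card = j := by
    rw [Nat.card_Icc]; omega
  have hεd : (ε (k+j+1) : ℝ) ≤ d (k+j+1) := by
    have := hε (k+j+1) (by omega)
    have h2 := hd (k+j+1) (by omega)
    exact_mod_cast le_trans this (by omega)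
  have hdpos : (0:ℝ) < d (k+j+1) := by
    have := hd (k+j+1) (by omega); positivity
  rw [abs_div, abs_mul, abs_pow, abs_neg, abs_one, one_pow, one_mul,
    Nat.abs_cast, abs_of_pos hpos]
  calc (ε (k+j+1) : ℝ) / ∏ i ∈ Finset.Icc (k+1) (k+j+1), (d i : ℝ)
      ≤ (d (k+j+1) : ℝ) / ∏ i ∈ Finset.Icc (k+1) (k+j+1), (d i : ℝ) := by gcongr
    _ = 1 / ∏ i ∈ Finset.Icc (k+1) (k+j), (d i : ℝ) := by
        rw [hsplit, mul_comm]; field_simp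
    _ ≤ 1 / 2 ^ j := by
        gcongr
        calc (2:ℝ)^j = 2 ^ (Finset.Icc (k+1) (k+j)).card := by rw [hcard]
          _ ≤ _ := two_pow_le_prod d hd (k+1) (k+j) (Nat.le_add_left 1 k)
    _ = (1/2 : ℝ) ^ j := by rw [div_pow, one_pow]

lemma negaSum_split (d ε : ℕ → ℕ) (hd : ∀ n, 1 ≤ n → 2 ≤ d n)
    (hε : ∀ n, 1 ≤ n → ε n ≤ d n - 1) (m : ℕ) :
    negaSum d ε = g d ε m + (-1 : ℝ) ^ m / P d m * shift d ε m := by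
  have hs0 : Summable (fun n : ℕ => (-1 : ℝ) ^ (n + 1) * (ε (n + 1) : ℝ) / P d (n + 1)) := by
    have := shift_term_summable d ε hd hε 0
    simpa [P] using this
  have hPm : P d m ≠ 0 := by
    rcases Nat.eq_zero_or_pos m with h | h
    · simp [P, h]
    · exact ne_of_gt (prod_pos' d hd 1 m le_rfl)
  rw [negaSum, ← hs0.sum_add_tsum_nat_add m]
  congr 1
  · -- finite part equals g
    rw [g, ← Finset.Ico_add_one_right_eq_Icc, Finset.sum_Ico_eq_sum_range]
    refine Finset.sum_congr (by norm_num) (fun i _ => by rw [add_comm 1 i])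
  · -- tail equals (-1)^m / P d m * shift
    rw [shift, ← tsum_mul_left]
    apply tsum_congr
    intro n
    have hProd : (0:ℝ) < ∏ i ∈ Finset.Icc (m+1) (m+n+1), (d i : ℝ) :=
      prod_pos' d hd (m+1) (m+n+1) (Nat.le_add_left 1 m)
    have hPsplit : P d m * ∏ i ∈ Finset.Icc (m+1) (m+n+1), (d i : ℝ) = P d (m+n+1) := by
      rw [P, P, show Finset.Icc 1 m = Finset.Ioc 0 m from Finset.Icc_add_one_left_eq_Ioc 0 m,
        show Finset.Icc (m+1) (m+n+1) = Finset.Ioc m (m+n+1) from Finset.Icc_add_one_left_eq_Ioc m (m+n+1),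
        show Finset.Icc 1 (m+n+1) = Finset.Ioc 0 (m+n+1) from Finset.Icc_add_one_left_eq_Ioc 0 (m+n+1)]
      exact Finset.prod_Ioc_consecutive _ (Nat.zero_le m) (by omega)
    rw [add_comm n m, ← hPsplit]
    have hpow : (-1 : ℝ) ^ (m + n + 1) = (-1) ^ m * (-1) ^ (n + 1) := by
      rw [← pow_add]; ring_nf
    rw [hpow]
    field_simp

theorem fixed_point_of_shift (d ε : ℕ → ℕ) (m : ℕ)
    (hm : 1 ≤ m) (hd : ∀ n, 1 ≤ n → 2 ≤ d n) (hε : ∀ n, 1 ≤ n → ε n ≤ d n - 1)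
    (hfix : shift d ε m = negaSum d ε) :
    negaSum d ε = (1 + 1 / ((-1 : ℝ) ^ m * P d m - 1)) * g d ε m := by
  have key := negaSum_split d ε hd hε m
  rw [hfix] at key
  have hQ : (2 : ℝ) ≤ P d m := by
    have h1 := two_pow_le_prod d hd 1 m le_rfl
    have hc : (Finset.Icc 1 m).card = m := by rw [Nat.card_Icc]; omega
    rw [hc] at h1
    calc (2:ℝ) = 2 ^ 1 := by norm_num
      _ ≤ 2 ^ m := by apply pow_le_pow_right₀ <;> norm_num [hm]
      _ ≤ P d m := h1
  rcases Nat.even_or_odd m with h | h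
  · rw [h.neg_one_pow] at key ⊢
    have h1 : (1:ℝ) * P d m - 1 ≠ 0 := by rw [one_mul]; intro h0; linarith
    have h2 : P d m ≠ 0 := by intro h0; linarith
    have hx : negaSum d ε * (P d m - 1) = P d m * g d ε m := by
      field_simp at key
      linear_combination key
    have h1' : P d m - 1 ≠ 0 := by intro h0; linarith
    rw [one_mul]
    field_simp
    linear_combination hx
  · rw [h.neg_one_pow] at key ⊢
    have h1 : (-1:ℝ) * P d m - 1 ≠ 0 := by intro h0; nlinarith
    have h2 : P d m ≠ 0 := by intro h0; linarith
    have hx : negaSum d ε * (P d m + 1) = P d m * g d ε m := by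
      field_simp at key
      linear_combination key
    have hQ1 : P d m + 1 ≠ 0 := by intro h0; linarith
    have hr : (1:ℝ) + 1 / (-1 * P d m - 1) = P d m / (P d m + 1) := by
      rw [show (-1:ℝ) * P d m - 1 = -(P d m + 1) by ring, div_neg, eq_div_iff hQ1, add_mul,
        one_mul, neg_mul, one_div, inv_mul_cancel₀ hQ1]
      ring
    rw [hr, div_mul_eq_mul_div, eq_div_iff hQ1]
    linear_combination hx
end
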